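/- arXiv:2503.13512 — 4 statements merged into one kernel-verified Lean document; each statement's English description precedes it below -/
import Mathlib

section
/- Let s : ℝ² → ℝ be continuous, positively homogeneous, centrally symmetric, and piecewise linear with finitely many pieces (i.e., there is a finite set of lines through the origin such that s is linear on each closed sector they determine). Then there exist finitely many linear forms L₁, …, L_k on ℝ² and real coefficients c₁, …, c_k such that s(x) = Σᵢ₌₁ᵏ cᵢ·|Lᵢ(x)| for all x. -/
open Filter Topology

noncomputable section

abbrev E2 := EuclideanSpace ℝ (Fin 2)

def LocLin (s : E2 → ℝ) (x : E2) : Prop := ∃ g : E2 →ₗ[ℝ] ℝ, ∀ᶠ y in 𝓝 x, s y = g y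

lemma form_cont (g : E2 →ₗ[ℝ] ℝ) : Continuous g := g.continuous_of_finiteDimensional

lemma form_eq_of_eqOn {g g' : E2 →ₗ[ℝ] ℝ} {U : Set E2} (hU : IsOpen U) (hne : U.Nonempty)
    (h : ∀ y ∈ U, g y = g' y) : g = g' := by
  obtain ⟨x, hx⟩ := hne
  obtain ⟨ε, hε, hball⟩ := Metric.isOpen_iff.1 hU x hx
  ext u
  rcases eq_or_ne u 0 with rfl | hu
  · simp
  · have hnu : 0 < ‖u‖ := norm_pos_iff.2 hu
    have hδ : 0 < ε / (2 * ‖u‖) := by positivity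
    have hmem : x + (ε / (2 * ‖u‖)) • u ∈ U := by
      apply hball
      simp only [Metric.mem_ball, dist_eq_norm, add_sub_cancel_left, norm_smul,
        Real.norm_eq_abs, abs_of_pos hδ]
      rw [div_mul_eq_mul_div, mul_comm]
      calc ‖u‖ * ε / (2 * ‖u‖) = ε / 2 := by
            field_simp
        _ < ε := by linarith
    have h1 := h _ hmem
    have h2 := h _ hx
    simp only [map_add, map_smul, smul_eq_mul] at h1
    rw [h2] at h1
    have := mul_left_cancel₀ (ne_of_gt hδ) (by linarith : (ε / (2 * ‖u‖)) * g u = (ε / (2 * ‖u‖)) * g' u)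
    exact this

lemma unique_cont {s : E2 → ℝ} {U : Set E2} (hU : IsOpen U) (hconn : IsPreconnected U)
    (hne : U.Nonempty) (hloc : ∀ y ∈ U, LocLin s y) :
    ∃ g : E2 →ₗ[ℝ] ℝ, ∀ y ∈ U, s y = g y := by
  obtain ⟨x, hx⟩ := hne
  obtain ⟨g₀, hg₀⟩ := hloc x hx
  refine ⟨g₀, ?_⟩
  set u : Set E2 := {y | ∀ᶠ z in 𝓝 y, s z = g₀ z} with hu_def
  set v : Set E2 := {y | ∃ g : E2 →ₗ[ℝ] ℝ, (∀ᶠ z in 𝓝 y, s z = g z) ∧ g ≠ g₀} with hv_def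
  have hu_open : IsOpen u := isOpen_setOf_eventually_nhds
  have hv_open : IsOpen v := by
    rw [isOpen_iff_mem_nhds]
    rintro y ⟨g, hg, hgne⟩
    obtain ⟨t, ht_mem, ht⟩ := eventually_iff_exists_mem.1 hg
    have hint : interior t ⊆ v := by
      intro y' hy'
      exact ⟨g, eventually_iff_exists_mem.2 ⟨interior t, isOpen_interior.mem_nhds hy',
        fun z hz => ht z (interior_subset hz)⟩, hgne⟩
    exact mem_of_superset (isOpen_interior.mem_nhds (mem_interior_iff_mem_nhds.2 ht_mem)) hint
  have huv_disj : u ∩ v = ∅ := by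
    ext y
    simp only [Set.mem_inter_iff, Set.mem_empty_iff_false, iff_false]
    rintro ⟨hyu, g, hg, hgne⟩
    have heq : ∀ᶠ z in 𝓝 y, g z = g₀ z := by
      filter_upwards [hyu, hg] with z h1 h2 using h2 ▸ h1
    obtain ⟨t, ht_mem, ht⟩ := eventually_iff_exists_mem.1 heq
    have : g = g₀ := form_eq_of_eqOn isOpen_interior
      ⟨y, mem_interior_iff_mem_nhds.2 ht_mem⟩
      (fun z hz => ht z (interior_subset hz))
    exact hgne this
  have hcover : U ⊆ u ∪ v := by
    intro y hy
    obtain ⟨g, hg⟩ := hloc y hy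
    by_cases hge : g = g₀
    · exact Or.inl (by simpa [hu_def, hge] using hg)
    · exact Or.inr ⟨g, hg, hge⟩
  have hUv : U ∩ v = ∅ := by
    by_contra hne'
    have h1 : (U ∩ u).Nonempty := ⟨x, hx, hg₀⟩
    have h2 : (U ∩ v).Nonempty := Set.nonempty_iff_ne_empty.2 hne'
    obtain ⟨z, hz⟩ := hconn u v hu_open hv_open hcover h1 h2
    rw [Set.inter_comm] at hz
    have : z ∈ u ∩ v := hz.1
    rw [huv_disj] at this
    exact this
  intro y hy
  rcases hcover hy with h | h
  · exact h.self_of_nhds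
  · exact absurd (Set.mem_inter hy h) (by rw [hUv]; exact id)

lemma exists_ker_gen {h : E2 →ₗ[ℝ] ℝ} (hh : h ≠ 0) :
    ∃ x₀ : E2, x₀ ≠ 0 ∧ LinearMap.ker h = Submodule.span ℝ {x₀} := by
  have hsurj : Function.Surjective h := by
    obtain ⟨w, hw⟩ : ∃ w, h w ≠ 0 := by
      by_contra hc
      push_neg at hc
      exact hh (LinearMap.ext fun w => by simp [hc w])
    intro a
    exact ⟨(a / h w) • w, by simp [map_smul, div_mul_cancel₀ _ hw]⟩
  have hrank : Module.finrank ℝ (LinearMap.ker h) = 1 := by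
    have h1 := LinearMap.finrank_range_add_finrank_ker h
    rw [LinearMap.range_eq_top.2 hsurj] at h1
    simp only [finrank_top, finrank_euclideanSpace_fin] at h1
    rw [Module.finrank_self] at h1
    omega
  obtain ⟨x₀, hx₀mem, hx₀ne⟩ := exists_mem_ne_zero_of_rank_pos
    (s := LinearMap.ker h) (by rw [← Module.finrank_eq_rank, hrank]; norm_num)
  refine ⟨x₀, hx₀ne, ?_⟩
  refine (Submodule.eq_of_le_of_finrank_le ?_ ?_).symm
  · rwa [Submodule.span_singleton_le_iff_mem]
  · rw [hrank, finrank_span_singleton hx₀ne]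

lemma exists_unit {h : E2 →ₗ[ℝ] ℝ} (hh : h ≠ 0) : ∃ v : E2, h v = 1 := by
  obtain ⟨w, hw⟩ : ∃ w, h w ≠ 0 := by
    by_contra hc
    push_neg at hc
    exact hh (LinearMap.ext fun w => by simp [hc w])
  exact ⟨(h w)⁻¹ • w, by simp [inv_mul_cancel₀ hw]⟩

lemma prop_of_vanish {h φ : E2 →ₗ[ℝ] ℝ} {x₀ : E2}
    (hker : LinearMap.ker h = Submodule.span ℝ {x₀}) {v : E2} (hv : h v = 1)
    (hφ : φ x₀ = 0) : ∀ x, φ x = φ v * h x := by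
  intro x
  have hmem : x - (h x) • v ∈ LinearMap.ker h := by
    simp [LinearMap.mem_ker, map_sub, map_smul, hv]
  rw [hker, Submodule.mem_span_singleton] at hmem
  obtain ⟨a, ha⟩ := hmem
  have hx : x = a • x₀ + (h x) • v := by rw [ha]; abel
  calc φ x = φ (a • x₀ + (h x) • v) := by rw [← hx]
    _ = a * φ x₀ + h x * φ v := by simp [map_add, map_smul]
    _ = φ v * h x := by rw [hφ]; ring

lemma mult_of_ker {h : E2 →ₗ[ℝ] ℝ} {x₀ : E2}
    (hker : LinearMap.ker h = Submodule.span ℝ {x₀}) {x : E2} (hx : h x = 0) :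
    ∃ a : ℝ, x = a • x₀ := by
  have : x ∈ LinearMap.ker h := hx
  rw [hker, Submodule.mem_span_singleton] at this
  obtain ⟨a, ha⟩ := this
  exact ⟨a, ha.symm⟩

set_option maxHeartbeats 2000000 in
lemma repKey (S : Finset (E2 →ₗ[ℝ] ℝ)) :
    ∀ s : E2 → ℝ, Continuous s →
    (∀ (l : ℝ) (x), 0 ≤ l → s (l • x) = l * s x) →
    (∀ x, s x = s (-x)) →
    (∀ φ ∈ S, φ ≠ (0 : E2 →ₗ[ℝ] ℝ)) →
    (∀ x : E2, x ≠ 0 → (∀ φ ∈ S, φ x ≠ 0) → LocLin s x) →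
    ∃ (k : ℕ) (L : Fin k → (E2 →ₗ[ℝ] ℝ)) (c : Fin k → ℝ),
      ∀ x, s x = ∑ i, c i * |L i x| := by
  classical
  induction S using Finset.induction_on with
  | empty =>
    intro s hcont hhom hsym _ hloc
    have hconn : IsPreconnected ({0}ᶜ : Set E2) := by
      have hrank : (1 : Cardinal) < Module.rank ℝ E2 := by
        rw [← Module.finrank_eq_rank, finrank_euclideanSpace_fin]
        norm_num
      exact (isPathConnected_compl_singleton_of_one_lt_rank hrank 0).isConnected.isPreconnected
    have hne : ({0}ᶜ : Set E2).Nonempty := by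
      refine ⟨EuclideanSpace.single 0 1, ?_⟩
      simp only [Set.mem_compl_iff, Set.mem_singleton_iff]
      intro hc
      have := congrFun (congrArg (fun (f : EuclideanSpace ℝ (Fin 2)) => (f : Fin 2 → ℝ)) hc) 0
      simp [EuclideanSpace.single] at this
    obtain ⟨g, hg⟩ := unique_cont isClosed_singleton.isOpen_compl hconn hne
      (fun y hy => hloc y hy (by simp))
    have hs0 : ∀ x, s x = 0 := by
      intro x
      rcases eq_or_ne x 0 with rfl | hx
      · have := hhom 0 0 le_rfl
        simpa using this
      · have h1 : s x = g x := hg x hx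
        have h2 : s (-x) = g (-x) := hg (-x) (by simpa using hx)
        have := hsym x
        rw [h1, h2, map_neg] at this
        linarith
    exact ⟨0, Fin.elim0, Fin.elim0, fun x => by simp [hs0 x]⟩
  | @insert h S' hnotmem ih =>
    intro s hcont hhom hsym hall hloc
    have hh : h ≠ 0 := hall h (Finset.mem_insert_self h S')
    have hallS' : ∀ φ ∈ S', φ ≠ (0 : E2 →ₗ[ℝ] ℝ) :=
      fun φ hφ => hall φ (Finset.mem_insert_of_mem hφ)
    by_cases hdup : ∃ h' ∈ S', LinearMap.ker h' = LinearMap.ker h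
    · obtain ⟨h', hh'S, hh'ker⟩ := hdup
      apply ih s hcont hhom hsym hallS'
      intro x hx hxφ
      apply hloc x hx
      intro φ hφ
      rcases Finset.mem_insert.1 hφ with rfl | hφ'
      · intro hc
        have : x ∈ LinearMap.ker h' := by rw [hh'ker]; exact hc
        exact hxφ h' hh'S this
      · exact hxφ φ hφ'
    · push_neg at hdup
      obtain ⟨x₀, hx₀ne, hker⟩ := exists_ker_gen hh
      obtain ⟨v, hv⟩ := exists_unit hh
      have hhx₀ : h x₀ = 0 := by
        have : x₀ ∈ LinearMap.ker h := by
          rw [hker]; exact Submodule.mem_span_singleton_self x₀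
        exact this
      -- x₀ is not in any other kernel
      have hx₀S' : ∀ φ ∈ S', φ x₀ ≠ 0 := by
        intro φ hφ hc
        obtain ⟨y₀, hy₀ne, hkerφ⟩ := exists_ker_gen (hallS' φ hφ)
        obtain ⟨a, ha⟩ := mult_of_ker hkerφ hc
        have hane : a ≠ 0 := by rintro rfl; simp at ha; exact hx₀ne ha
        have hspan : Submodule.span ℝ ({x₀} : Set E2) = Submodule.span ℝ ({y₀} : Set E2) := by
          apply le_antisymm
          · rw [Submodule.span_singleton_le_iff_mem, ha]
            exact Submodule.smul_mem _ a (Submodule.mem_span_singleton_self y₀)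
          · rw [Submodule.span_singleton_le_iff_mem]
            have : y₀ = a⁻¹ • x₀ := by rw [ha, smul_smul, inv_mul_cancel₀ hane, one_smul]
            rw [this]
            exact Submodule.smul_mem _ _ (Submodule.mem_span_singleton_self x₀)
        exact hdup φ hφ (by rw [hkerφ, ← hspan, ← hker])
      -- choose a ball around x₀ avoiding 0 and all kernels of S'
      have hWopen : IsOpen {y : E2 | (∀ φ ∈ S', φ y ≠ 0) ∧ y ≠ 0} := by
        have h1 : IsOpen {y : E2 | ∀ φ ∈ S', φ y ≠ 0} := by
          have : {y : E2 | ∀ φ ∈ S', φ y ≠ 0} = ⋂ φ ∈ S', {y : E2 | φ y ≠ 0} := by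
            ext y; simp
          rw [this]
          exact isOpen_biInter_finset fun φ _ =>
            isOpen_compl_iff.2 (isClosed_eq (form_cont φ) continuous_const)
        have h2 : IsOpen ({0}ᶜ : Set E2) := isClosed_singleton.isOpen_compl
        have : {y : E2 | (∀ φ ∈ S', φ y ≠ 0) ∧ y ≠ 0}
            = {y : E2 | ∀ φ ∈ S', φ y ≠ 0} ∩ ({0}ᶜ : Set E2) := by ext y; simp [Set.mem_compl_iff]
        rw [this]; exact h1.inter h2
      obtain ⟨ε, hε, hball⟩ := Metric.isOpen_iff.1 hWopen x₀ ⟨hx₀S', hx₀ne⟩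
      set B := Metric.ball x₀ ε with hBdef
      set Bp := B ∩ {y : E2 | 0 < h y} with hBpdef
      set Bm := B ∩ {y : E2 | h y < 0} with hBmdef
      have hBp_open : IsOpen Bp := Metric.isOpen_ball.inter (isOpen_lt continuous_const (form_cont h))
      have hBm_open : IsOpen Bm := Metric.isOpen_ball.inter (isOpen_lt (form_cont h) continuous_const)
      have hBp_conn : IsPreconnected Bp :=
        ((convex_ball x₀ ε).inter (convex_halfSpace_gt h.isLinear 0)).isPreconnected
      have hBm_conn : IsPreconnected Bm :=
        ((convex_ball x₀ ε).inter (convex_halfSpace_lt h.isLinear 0)).isPreconnected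
      have hvne : (0:ℝ) < ‖v‖ := by
        rw [norm_pos_iff]
        rintro rfl
        simp at hv
      have hmemB : ∀ (y : E2) (t : ℝ), y ∈ B → |t| < (ε - dist y x₀)/‖v‖ → y + t • v ∈ B := by
        intro y t hy ht
        have hd : dist y x₀ < ε := hy
        calc dist (y + t • v) x₀ ≤ dist (y + t • v) y + dist y x₀ := dist_triangle _ _ _
          _ < ε := by
              have : dist (y + t • v) y = |t| * ‖v‖ := by
                rw [dist_eq_norm, add_sub_cancel_left, norm_smul, Real.norm_eq_abs]
              rw [this]
              have h2 : |t| * ‖v‖ < ε - dist y x₀ := by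
                calc |t| * ‖v‖ < ((ε - dist y x₀)/‖v‖) * ‖v‖ := by
                      exact mul_lt_mul_of_pos_right ht hvne
                  _ = ε - dist y x₀ := by field_simp
              linarith
      have hBp_ne : Bp.Nonempty := by
        refine ⟨x₀ + ((ε/2)/‖v‖) • v, hmemB x₀ _ (Metric.mem_ball_self hε) ?_, ?_⟩
        · rw [abs_of_pos (by positivity)]
          simp only [dist_self, sub_zero]
          rw [div_lt_div_iff_of_pos_right hvne]
          linarith
        · simp only [Set.mem_setOf_eq, map_add, map_smul, hhx₀, smul_eq_mul, hv, zero_add, mul_one]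
          positivity
      have hBm_ne : Bm.Nonempty := by
        refine ⟨x₀ + (-((ε/2)/‖v‖)) • v, hmemB x₀ _ (Metric.mem_ball_self hε) ?_, ?_⟩
        · rw [abs_neg, abs_of_pos (by positivity)]
          simp only [dist_self, sub_zero]
          rw [div_lt_div_iff_of_pos_right hvne]
          linarith
        · simp only [Set.mem_setOf_eq, map_add, map_smul, hhx₀, smul_eq_mul, hv, zero_add, mul_one]
          have : (0:ℝ) < (ε/2)/‖v‖ := by positivity
          linarith
      have hlocBp : ∀ y ∈ Bp, LocLin s y := by
        rintro y ⟨hyB, hy⟩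
        obtain ⟨hyS', hyne⟩ := hball hyB
        apply hloc y hyne
        intro φ hφ
        rcases Finset.mem_insert.1 hφ with rfl | hφ'
        · exact ne_of_gt hy
        · exact hyS' φ hφ'
      have hlocBm : ∀ y ∈ Bm, LocLin s y := by
        rintro y ⟨hyB, hy⟩
        obtain ⟨hyS', hyne⟩ := hball hyB
        apply hloc y hyne
        intro φ hφ
        rcases Finset.mem_insert.1 hφ with rfl | hφ'
        · exact ne_of_lt hy
        · exact hyS' φ hφ'
      obtain ⟨gp, hgp⟩ := unique_cont hBp_open hBp_conn hBp_ne hlocBp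
      obtain ⟨gm, hgm⟩ := unique_cont hBm_open hBm_conn hBm_ne hlocBm
      -- boundary values
      have hbdryp : ∀ y ∈ B, h y = 0 → s y = gp y := by
        intro y hyB hy0
        have hclos : y ∈ closure Bp := by
          have htend : Filter.Tendsto (fun t : ℝ => y + t • v) (𝓝[>] 0) (𝓝 y) := by
            have hc : Continuous (fun t : ℝ => y + t • v) :=
              continuous_const.add (continuous_id.smul continuous_const)
            have := hc.tendsto 0
            simp only [zero_smul, add_zero] at this
            exact this.mono_left nhdsWithin_le_nhds
          refine mem_closure_of_tendsto htend ?_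
          have hBev : ∀ᶠ t : ℝ in 𝓝[>] 0, y + t • v ∈ B := by
            apply eventually_nhdsWithin_of_eventually_nhds
            have : ∀ᶠ t : ℝ in 𝓝 0, |t| < (ε - dist y x₀)/‖v‖ := by
              have hpos : (0:ℝ) < (ε - dist y x₀)/‖v‖ := by
                have hlt : dist y x₀ < ε := hyB
                exact div_pos (by linarith) hvne
              have : Filter.Tendsto (fun t : ℝ => |t|) (𝓝 0) (𝓝 0) := by
                simpa using (continuous_abs.tendsto (0:ℝ))
              exact this.eventually_lt_const hpos
            filter_upwards [this] with t ht using hmemB y t hyB ht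
          filter_upwards [hBev, self_mem_nhdsWithin] with t htB htpos
          refine ⟨htB, ?_⟩
          simp only [Set.mem_setOf_eq, map_add, map_smul, hy0, smul_eq_mul, hv, zero_add, mul_one]
          exact htpos
        have hclosed : IsClosed {z : E2 | s z = gp z} := isClosed_eq hcont (form_cont gp)
        have : closure Bp ⊆ {z : E2 | s z = gp z} :=
          hclosed.closure_subset_iff.2 (fun z hz => hgp z hz)
        exact this hclos
      have hbdrym : ∀ y ∈ B, h y = 0 → s y = gm y := by
        intro y hyB hy0
        have hclos : y ∈ closure Bm := by
          have htend : Filter.Tendsto (fun t : ℝ => y + (-t) • v) (𝓝[>] 0) (𝓝 y) := by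
            have hc : Continuous (fun t : ℝ => y + (-t) • v) :=
              continuous_const.add ((continuous_neg.comp continuous_id).smul continuous_const)
            have := hc.tendsto 0
            simp only [neg_zero, zero_smul, add_zero] at this
            exact this.mono_left nhdsWithin_le_nhds
          refine mem_closure_of_tendsto htend ?_
          have hBev : ∀ᶠ t : ℝ in 𝓝[>] 0, y + (-t) • v ∈ B := by
            apply eventually_nhdsWithin_of_eventually_nhds
            have : ∀ᶠ t : ℝ in 𝓝 0, |t| < (ε - dist y x₀)/‖v‖ := by
              have hpos : (0:ℝ) < (ε - dist y x₀)/‖v‖ := by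
                have hlt : dist y x₀ < ε := hyB
                exact div_pos (by linarith) hvne
              have habs : Filter.Tendsto (fun t : ℝ => |t|) (𝓝 0) (𝓝 0) := by
                simpa using (continuous_abs.tendsto (0:ℝ))
              exact habs.eventually_lt_const hpos
            filter_upwards [this] with t ht using hmemB y (-t) hyB (by rwa [abs_neg])
          filter_upwards [hBev, self_mem_nhdsWithin] with t htB htpos
          refine ⟨htB, ?_⟩
          simp only [Set.mem_Ioi] at htpos
          simp only [Set.mem_setOf_eq, map_add, map_smul, hy0, smul_eq_mul, hv, zero_add, mul_one]
          linarith
        have hclosed : IsClosed {z : E2 | s z = gm z} := isClosed_eq hcont (form_cont gm)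
        have : closure Bm ⊆ {z : E2 | s z = gm z} :=
          hclosed.closure_subset_iff.2 (fun z hz => hgm z hz)
        exact this hclos
      have hx₀B : x₀ ∈ B := Metric.mem_ball_self hε
      set lam : ℝ := (gp - gm) v with hlam_def
      set c : ℝ := lam / 2 with hc_def
      have hdiff : ∀ z, gp z - gm z = lam * h z := by
        have h0 : (gp - gm) x₀ = 0 := by
          simp only [LinearMap.sub_apply]
          rw [← hbdryp x₀ hx₀B hhx₀, ← hbdrym x₀ hx₀B hhx₀]
          ring
        intro z
        have := prop_of_vanish hker hv h0 z
        simpa only [LinearMap.sub_apply, hlam_def] using this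
      set g' : E2 →ₗ[ℝ] ℝ := gp - c • h with hg'_def
      set s' : E2 → ℝ := fun x => s x - c * |h x| with hs'_def
      have hB_eq : ∀ y ∈ B, s' y = g' y := by
        intro y hyB
        simp only [hs'_def, hg'_def, LinearMap.sub_apply, LinearMap.smul_apply, smul_eq_mul]
        rcases lt_trichotomy (h y) 0 with hy | hy | hy
        · have hsy : s y = gm y := hgm y ⟨hyB, hy⟩
          have := hdiff y
          rw [hsy, abs_of_neg hy]
          have hgpy : gp y = gm y + lam * h y := by linarith [hdiff y]
          rw [hgpy, hc_def]
          ring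
        · have hsy : s y = gp y := hbdryp y hyB hy
          rw [hsy, hy]
          simp
        · have hsy : s y = gp y := hgp y ⟨hyB, hy⟩
          rw [hsy, abs_of_pos hy]
      -- properties of s'
      have hs'cont : Continuous s' :=
        hcont.sub (continuous_const.mul (continuous_abs.comp (form_cont h)))
      have hs'hom : ∀ (l : ℝ) (x : E2), 0 ≤ l → s' (l • x) = l * s' x := by
        intro l x hl
        simp only [hs'_def]
        rw [hhom l x hl, map_smul, smul_eq_mul, abs_mul, abs_of_nonneg hl]
        ring
      have hs'sym : ∀ x : E2, s' x = s' (-x) := by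
        intro x
        simp only [hs'_def]
        rw [hsym x, map_neg, abs_neg]
      -- local linearity at positive multiples of x₀
      have hpos_form : ∀ a : ℝ, 0 < a → ∀ z ∈ Metric.ball (a • x₀) (a * ε), s' z = g' z := by
        intro a ha z hz
        have hz_eq : z = a • (a⁻¹ • z) := by
          rw [smul_smul, mul_inv_cancel₀ (ne_of_gt ha), one_smul]
        have hy : a⁻¹ • z ∈ B := by
          rw [hBdef, Metric.mem_ball]
          have key : dist z (a • x₀) = a * dist (a⁻¹ • z) x₀ := by
            conv_lhs => rw [hz_eq]
            rw [dist_smul₀, Real.norm_eq_abs, abs_of_pos ha]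
          have hd : dist z (a • x₀) < a * ε := hz
          rw [key] at hd
          exact lt_of_mul_lt_mul_left hd (le_of_lt ha)
        calc s' z = s' (a • (a⁻¹ • z)) := by rw [← hz_eq]
          _ = a * s' (a⁻¹ • z) := hs'hom a _ (le_of_lt ha)
          _ = a * g' (a⁻¹ • z) := by rw [hB_eq _ hy]
          _ = g' z := by rw [map_smul, smul_eq_mul]; field_simp
      have hloc' : ∀ x : E2, x ≠ 0 → (∀ φ ∈ S', φ x ≠ 0) → LocLin s' x := by
        intro x hxne hxS'
        by_cases hhx : h x = 0
        · -- x is a nonzero multiple of x₀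
          obtain ⟨a, ha⟩ := mult_of_ker hker hhx
          have hane : a ≠ 0 := by rintro rfl; simp at ha; exact hxne ha
          rcases lt_or_gt_of_ne hane with haneg | hapos
          · refine ⟨-g', ?_⟩
            have hball' : Metric.ball x (-a * ε) ∈ 𝓝 x :=
              Metric.ball_mem_nhds x (mul_pos (by linarith) hε)
            filter_upwards [hball'] with z hz
            have hmz : -z ∈ Metric.ball ((-a) • x₀) (-a * ε) := by
              rw [Metric.mem_ball] at hz ⊢
              rw [neg_smul, ← ha, dist_neg_neg]
              exact hz
            have := hpos_form (-a) (by linarith) (-z) hmz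
            have hsym' : s' z = s' (-z) := hs'sym z
            rw [hsym', this]
            simp
          · refine ⟨g', ?_⟩
            have hball' : Metric.ball x (a * ε) ∈ 𝓝 x :=
              Metric.ball_mem_nhds x (by positivity)
            filter_upwards [hball'] with z hz
            exact hpos_form a hapos z (by rwa [← ha])
        · -- h x ≠ 0 : s is locally linear at x and |h| is locally h or -h
          obtain ⟨g, hg⟩ := hloc x hxne (by
            intro φ hφ
            rcases Finset.mem_insert.1 hφ with rfl | hφ'
            · exact hhx
            · exact hxS' φ hφ')
          rcases lt_or_gt_of_ne hhx with hneg | hpos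
          · refine ⟨g + c • h, ?_⟩
            have hev : ∀ᶠ z in 𝓝 x, h z < 0 :=
              (form_cont h).continuousAt.eventually_lt continuousAt_const hneg
            filter_upwards [hg, hev] with z h1 h2
            simp only [hs'_def, LinearMap.add_apply, LinearMap.smul_apply, smul_eq_mul]
            rw [h1, abs_of_neg h2]
            ring
          · refine ⟨g - c • h, ?_⟩
            have hev : ∀ᶠ z in 𝓝 x, 0 < h z :=
              continuousAt_const.eventually_lt (form_cont h).continuousAt hpos
            filter_upwards [hg, hev] with z h1 h2
            simp only [hs'_def, LinearMap.sub_apply, LinearMap.smul_apply, smul_eq_mul]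
            rw [h1, abs_of_pos h2]
      obtain ⟨k, L, cc, hrep⟩ := ih s' hs'cont hs'hom hs'sym hallS' hloc'
      refine ⟨k + 1, Fin.cons h L, Fin.cons c cc, ?_⟩
      intro x
      rw [Fin.sum_univ_succ]
      have := hrep x
      simp only [hs'_def] at this
      simp only [Fin.cons_zero, Fin.cons_succ]
      linarith

theorem stmt11 (s : EuclideanSpace ℝ (Fin 2) → ℝ)
    (hcont : Continuous s)
    (hhom : ∀ (l : ℝ) (x), 0 ≤ l → s (l • x) = l * s x)
    (hsym : ∀ x, s x = s (-x))
    (hpl : ∃ (n : ℕ) (A : Fin n → Set (EuclideanSpace ℝ (Fin 2)))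
        (g : Fin n → (EuclideanSpace ℝ (Fin 2) →ₗ[ℝ] ℝ)),
      (∀ i, Convex ℝ (A i)) ∧ (∀ i, IsClosed (A i)) ∧
      (⋃ i, A i) = Set.univ ∧ ∀ i, ∀ x ∈ A i, s x = g i x) :
    ∃ (k : ℕ) (L : Fin k → (EuclideanSpace ℝ (Fin 2) →ₗ[ℝ] ℝ)) (c : Fin k → ℝ),
      ∀ x, s x = ∑ i, c i * |L i x| := by
  classical
  obtain ⟨n, A, g, _, _, hcover, hlin⟩ := hpl
  set S : Finset (E2 →ₗ[ℝ] ℝ) :=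
    ((Finset.univ : Finset (Fin n × Fin n)).image (fun p => g p.1 - g p.2)).erase 0 with hS
  have hSne : ∀ φ ∈ S, φ ≠ (0 : E2 →ₗ[ℝ] ℝ) := fun φ hφ => (Finset.mem_erase.1 hφ).1
  have hmemA : ∀ x : E2, ∃ i, x ∈ A i := by
    intro x
    have : x ∈ ⋃ i, A i := by rw [hcover]; trivial
    exact Set.mem_iUnion.1 this
  have hloc : ∀ x : E2, x ≠ 0 → (∀ φ ∈ S, φ x ≠ 0) → LocLin s x := by
    intro x _ hxS
    have hdist : ∀ i j, g i ≠ g j → g i x ≠ g j x := by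
      intro i j hij hc
      have hmem : g i - g j ∈ S := by
        rw [hS]
        refine Finset.mem_erase.2 ⟨sub_ne_zero.2 hij, ?_⟩
        exact Finset.mem_image.2 ⟨(i, j), Finset.mem_univ _, rfl⟩
      have := hxS _ hmem
      simp only [LinearMap.sub_apply] at this
      exact this (by rw [hc]; ring)
    -- an open neighbourhood where distinct forms never agree
    set pairs : Finset (Fin n × Fin n) := Finset.univ.filter (fun p => g p.1 ≠ g p.2) with hpairs
    set W : Set E2 := ⋂ p ∈ pairs, {y : E2 | (g p.1 - g p.2) y ≠ 0} with hW
    have hWopen : IsOpen W :=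
      isOpen_biInter_finset fun p _ =>
        isOpen_compl_iff.2 (isClosed_eq (form_cont _) continuous_const)
    have hxW : x ∈ W := by
      rw [hW]
      refine Set.mem_iInter₂.2 fun p hp => ?_
      have hpne : g p.1 ≠ g p.2 := (Finset.mem_filter.1 hp).2
      simp only [Set.mem_setOf_eq, LinearMap.sub_apply, sub_ne_zero]
      exact hdist p.1 p.2 hpne
    obtain ⟨ε, hε, hball⟩ := Metric.isOpen_iff.1 hWopen x hxW
    obtain ⟨i₀, hi₀⟩ := hmemA x
    have hsx : s x = g i₀ x := hlin i₀ x hi₀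
    set bad : Finset (Fin n) := Finset.univ.filter (fun j => g j ≠ g i₀) with hbad
    set good : Finset (Fin n) := Finset.univ.filter (fun j => g j = g i₀) with hgood
    set F₁ : Set E2 := ⋃ j ∈ bad, {y : E2 | s y = g j y} with hF₁
    set F₂ : Set E2 := ⋃ j ∈ good, {y : E2 | s y = g j y} with hF₂
    have hF₁closed : IsClosed F₁ :=
      Set.Finite.isClosed_biUnion (bad.finite_toSet)
        (fun j _ => isClosed_eq hcont (form_cont _))
    have hF₂closed : IsClosed F₂ :=
      Set.Finite.isClosed_biUnion (good.finite_toSet)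
        (fun j _ => isClosed_eq hcont (form_cont _))
    have hballW : Metric.ball x ε ⊆ W := hball
    have hagree : ∀ y ∈ Metric.ball x ε, ∀ i j : Fin n, g i ≠ g j → g i y ≠ g j y := by
      intro y hy i j hij
      have := Set.mem_iInter₂.1 (hballW hy) (i, j)
        (Finset.mem_filter.2 ⟨Finset.mem_univ _, hij⟩)
      simp only [Set.mem_setOf_eq, LinearMap.sub_apply, sub_ne_zero] at this
      exact this
    have hcoverB : Metric.ball x ε ⊆ F₁ᶜ ∪ F₂ᶜ := by
      intro y hy
      by_contra hc
      simp only [Set.mem_union, Set.mem_compl_iff, not_or, not_not] at hc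
      obtain ⟨h1, h2⟩ := hc
      obtain ⟨j, hj, hjy⟩ := Set.mem_iUnion₂.1 h1
      obtain ⟨k, hk, hky⟩ := Set.mem_iUnion₂.1 h2
      have hjbad : g j ≠ g i₀ := (Finset.mem_filter.1 hj).2
      have hkgood : g k = g i₀ := (Finset.mem_filter.1 hk).2
      have : g j y = g k y := by
        rw [← hjy, ← hky]
      exact hagree y hy j k (by rw [hkgood]; exact hjbad) (by rw [this])
    have hxu : x ∈ F₁ᶜ := by
      intro hc
      obtain ⟨j, hj, hjy⟩ := Set.mem_iUnion₂.1 hc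
      have hjbad : g j ≠ g i₀ := (Finset.mem_filter.1 hj).2
      have : g j x = g i₀ x := by rw [← hjy]; exact hsx
      exact hdist j i₀ hjbad this
    have hBv : Metric.ball x ε ∩ F₂ᶜ = ∅ := by
      by_contra hc
      obtain ⟨z, hz⟩ := (convex_ball x ε).isPreconnected F₁ᶜ F₂ᶜ
        hF₁closed.isOpen_compl hF₂closed.isOpen_compl hcoverB
        ⟨x, Metric.mem_ball_self hε, hxu⟩ (Set.nonempty_iff_ne_empty.2 hc)
      obtain ⟨hzB, hz1, hz2⟩ := hz
      obtain ⟨i, hi⟩ := hmemA z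
      have hsz : s z = g i z := hlin i z hi
      by_cases hgi : g i = g i₀
      · exact hz2 (Set.mem_iUnion₂.2 ⟨i, Finset.mem_filter.2 ⟨Finset.mem_univ _, hgi⟩, hsz⟩)
      · exact hz1 (Set.mem_iUnion₂.2 ⟨i, Finset.mem_filter.2 ⟨Finset.mem_univ _, hgi⟩, hsz⟩)
    refine ⟨g i₀, ?_⟩
    filter_upwards [Metric.ball_mem_nhds x hε] with y hy
    have : y ∈ F₂ := by
      by_contra hc
      exact Set.eq_empty_iff_forall_notMem.1 hBv y ⟨hy, hc⟩
    obtain ⟨j, hj, hjy⟩ := Set.mem_iUnion₂.1 this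
    have hjgood : g j = g i₀ := (Finset.mem_filter.1 hj).2
    rw [hjy, hjgood]
  exact repKey S s hcont hhom hsym hSne hloc

end
end

section
/- Let C ⊆ ℝ² be an open cone that is the positivity set of h(x) = ⟪e, x⟫ + Σᵢ εᵢ|⟪wᵢ, x⟫| with εᵢ ∈ {1,-1}. Define R = {p ∈ C : −p ∉ C} and G = {p : p ∈ frontier C ∧ −p ∈ frontier C}. Then the linear span of G is disjoint from the convex hull of R. -/
theorem stmt17 (t : ℕ) (e : EuclideanSpace ℝ (Fin 2))
    (w : Fin t → EuclideanSpace ℝ (Fin 2)) (ε : Fin t → ℝ)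
    (hε : ∀ i, ε i = 1 ∨ ε i = -1)
    (h : EuclideanSpace ℝ (Fin 2) → ℝ)
    (hh : ∀ x, h x = (inner ℝ e x : ℝ) + ∑ i, ε i * |(inner ℝ (w i) x : ℝ)|)
    (C : Set (EuclideanSpace ℝ (Fin 2)))
    (hcone : ∀ p ∈ C, ∀ l : ℝ, 0 < l → l • p ∈ C)
    (hopen : IsOpen C)
    (hpos : C = {x | 0 < h x})
    (R G : Set (EuclideanSpace ℝ (Fin 2)))
    (hR : R = {p | p ∈ C ∧ -p ∉ C})
    (hG : G = {p | p ∈ frontier C ∧ -p ∈ frontier C}) :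
    Disjoint (Submodule.span ℝ G : Set (EuclideanSpace ℝ (Fin 2)))
      (convexHull ℝ R) := by
  set f : EuclideanSpace ℝ (Fin 2) →ₗ[ℝ] ℝ := (innerSL ℝ e : _ →L[ℝ] ℝ).toLinearMap
  have hf : ∀ x, f x = (inner ℝ e x : ℝ) := fun x => rfl
  have key : ∀ p, h p - h (-p) = 2 * (inner ℝ e p : ℝ) := by
    intro p
    rw [hh p, hh (-p), inner_neg_right]
    have hs : ∑ i, ε i * |(inner ℝ (w i) (-p) : ℝ)| = ∑ i, ε i * |(inner ℝ (w i) p : ℝ)| :=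
      Finset.sum_congr rfl fun i _ => by rw [inner_neg_right, abs_neg]
    rw [hs]; ring
  -- continuity of h
  have hc : Continuous h := by
    have : h = fun x => (inner ℝ e x : ℝ) + ∑ i, ε i * |(inner ℝ (w i) x : ℝ)| :=
      funext hh
    rw [this]
    refine ((innerSL ℝ e).continuous).add ?_
    exact continuous_finset_sum _ fun i _ =>
      continuous_const.mul ((innerSL ℝ (w i)).continuous.abs)
  -- frontier facts
  have hfr : ∀ p ∈ frontier C, h p = 0 := by
    intro p hp
    have h1 : h p ≤ 0 := by
      have hcl : IsClosed Cᶜ := hopen.isClosed_compl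
      have : p ∈ Cᶜ := by
        have := frontier_subset_closure (s := Cᶜ)
        rw [hcl.closure_eq] at this
        exact this (by rwa [frontier_compl])
      rw [hpos] at this
      simpa using this
    have h2 : 0 ≤ h p := by
      have hCsub : C ⊆ {x | 0 ≤ h x} := by
        rw [hpos]; intro x hx
        simp only [Set.mem_setOf_eq] at hx ⊢
        exact hx.le
      have hclosed : IsClosed {x | 0 ≤ h x} := isClosed_le continuous_const hc
      exact closure_minimal hCsub hclosed (frontier_subset_closure hp)
    linarith
  -- span G ≤ ker f
  have hspan : Submodule.span ℝ G ≤ LinearMap.ker f := by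
    rw [Submodule.span_le]
    intro p hp
    rw [hG] at hp
    have h1 : h p = 0 := hfr p hp.1
    have h2 : h (-p) = 0 := hfr (-p) hp.2
    have := key p
    simp only [LinearMap.mem_ker, SetLike.mem_coe, hf]
    linarith
  -- convexHull R ⊆ {x | 0 < f x}
  have hhull : convexHull ℝ R ⊆ {x | 0 < f x} := by
    apply convexHull_min
    · intro p hp
      rw [hR] at hp
      have h1 : 0 < h p := by rw [hpos] at hp; exact hp.1
      have h2 : h (-p) ≤ 0 := by
        have := hp.2
        rw [hpos] at this
        simpa using this
      have := key p
      simp only [Set.mem_setOf_eq, hf]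
      linarith
    · exact convex_halfSpace_gt (LinearMap.isLinear f) 0
  rw [Set.disjoint_left]
  intro x hx hx'
  have h1 : f x = 0 := hspan hx
  have h2 : 0 < f x := hhull hx'
  linarith
end

section
/- Let h : ℝᵈ → ℝ, h(x) = L₀(x) + Σᵢ₌₁ᵗ εᵢ·|Lᵢ(x)| with each Lᵢ affine linear and εᵢ ∈ {1,-1}, and let p ∈ ℝᵈ. Then there exist a radius r > 0 and a vector γ ∈ ℝᵈ such that for every q in the open ball B(p, r) at which h is differentiable and such that 2p − q is also a differentiability point of h, one has ∇h(q) + ∇h(2p − q) = γ. -/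
open Metric InnerProductSpace

set_option maxHeartbeats 1000000 in
theorem stmt18 (d t : ℕ) (L₀ : (EuclideanSpace ℝ (Fin d)) →ᵃ[ℝ] ℝ)
    (L : Fin t → ((EuclideanSpace ℝ (Fin d)) →ᵃ[ℝ] ℝ)) (ε : Fin t → ℝ)
    (hε : ∀ i, ε i = 1 ∨ ε i = -1)
    (h : EuclideanSpace ℝ (Fin d) → ℝ)
    (hh : ∀ x, h x = L₀ x + ∑ i, ε i * |L i x|)
    (p : EuclideanSpace ℝ (Fin d)) :
    ∃ r > 0, ∃ γ : EuclideanSpace ℝ (Fin d),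
      ∀ q ∈ Metric.ball p r, DifferentiableAt ℝ h q →
        DifferentiableAt ℝ h ((2 : ℝ) • p - q) →
        gradient h q + gradient h ((2 : ℝ) • p - q) = γ := by
  classical
  have hLval : ∀ (M : EuclideanSpace ℝ (Fin d) →ᵃ[ℝ] ℝ) (y : EuclideanSpace ℝ (Fin d)), M y = M.linear y + M 0 := by
    intro M y
    conv_lhs => rw [AffineMap.decomp M]
    rfl
  -- signs and coefficients
  set sgn : Fin t → ℝ := fun i => if 0 < L i p then 1 else -1 with hsgn
  set c : Fin t → ℝ := fun i => if L i p = 0 then 0 else ε i * sgn i with hc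
  -- the affine part
  set A : EuclideanSpace ℝ (Fin d) → ℝ := fun x => L₀ x + ∑ i, c i * L i x with hA
  set lA : EuclideanSpace ℝ (Fin d) →L[ℝ] ℝ :=
    LinearMap.toContinuousLinearMap L₀.linear +
      ∑ i, c i • LinearMap.toContinuousLinearMap (L i).linear with hlA
  have hAff : ∀ (M : EuclideanSpace ℝ (Fin d) →ᵃ[ℝ] ℝ) (y : EuclideanSpace ℝ (Fin d)),
      HasFDerivAt (fun z => M z) (LinearMap.toContinuousLinearMap M.linear) y := by
    intro M y
    have h1 : HasFDerivAt (fun z : EuclideanSpace ℝ (Fin d) => M.linear z + M 0)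
        (LinearMap.toContinuousLinearMap M.linear) y :=
      (LinearMap.toContinuousLinearMap M.linear).hasFDerivAt.add_const (M 0)
    exact h1.congr_of_eventuallyEq (Filter.Eventually.of_forall fun z => (hLval M z))
  have hAderiv : ∀ x : EuclideanSpace ℝ (Fin d), HasFDerivAt A lA x := by
    intro x
    apply HasFDerivAt.add (hAff L₀ x)
    exact HasFDerivAt.fun_sum fun i _ => (hAff (L i) x).const_mul (c i)
  -- choice of the radius
  set U : Set (EuclideanSpace ℝ (Fin d)) := ⋂ i, {x | L i p ≠ 0 → 0 < L i x * L i p} with hU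
  have hUopen : IsOpen U := by
    apply isOpen_iInter_of_finite
    intro i
    by_cases hi : L i p = 0
    · simp [hi]
    · have he : {x : EuclideanSpace ℝ (Fin d) | L i p ≠ 0 → 0 < L i x * L i p} = {x | 0 < L i x * L i p} := by
        ext x; simp [hi]
      rw [he]
      exact isOpen_lt continuous_const
        (((L i).continuous_of_finiteDimensional).mul continuous_const)
  have hpU : p ∈ U := by
    rw [hU, Set.mem_iInter]
    intro i hi
    exact mul_self_pos.2 hi
  obtain ⟨r, hr0, hrU⟩ := Metric.isOpen_iff.1 hUopen p hpU
  -- sign stability on the ball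
  have key : ∀ x ∈ ball p r, ∀ i, L i p ≠ 0 → c i * L i x = ε i * |L i x| := by
    intro x hx i hi
    have hprod : 0 < L i x * L i p := (Set.mem_iInter.1 (hrU hx) i) hi
    have hs : sgn i * L i x = |L i x| := by
      rcases hi.lt_or_gt with hlt | hgt
      · have hxneg : L i x < 0 := by
          rcases mul_pos_iff.1 hprod with ⟨h1, h2⟩ | ⟨h1, h2⟩
          · linarith
          · exact h1
        rw [hsgn]
        simp only [if_neg (not_lt.2 hlt.le)]
        rw [abs_of_neg hxneg]; ring
      · have hxpos : 0 < L i x := by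
          rcases mul_pos_iff.1 hprod with ⟨h1, h2⟩ | ⟨h1, h2⟩
          · exact h1
          · linarith
        rw [hsgn]
        simp only [if_pos hgt]
        rw [abs_of_pos hxpos]; ring
    rw [hc]
    simp only [if_neg hi]
    rw [mul_assoc, hs]
  -- the residual part
  set N : EuclideanSpace ℝ (Fin d) → ℝ := fun x => h x - A x with hN
  have hNball : ∀ x ∈ ball p r, N x = ∑ i, if L i p = 0 then ε i * |L i x| else 0 := by
    intro x hx
    rw [hN]
    simp only [hh x, hA]
    rw [add_sub_add_left_eq_sub, ← Finset.sum_sub_distrib]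
    apply Finset.sum_congr rfl
    intro i _
    by_cases hi : L i p = 0
    · simp [hc, hi]
    · simp only [if_neg hi]
      rw [key x hx i hi]; ring
  -- point reflection
  set σ : EuclideanSpace ℝ (Fin d) → EuclideanSpace ℝ (Fin d) := fun x => (2 : ℝ) • p - x with hσ
  have hσball : ∀ x ∈ ball p r, σ x ∈ ball p r := by
    intro x hx
    rw [mem_ball, dist_eq_norm] at hx ⊢
    have : σ x - p = -(x - p) := by
      rw [hσ]; simp only; rw [two_smul]; abel
    rw [this, norm_neg]; exact hx
  have hLσ : ∀ i, L i p = 0 → ∀ x, L i (σ x) = -(L i x) := by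
    intro i hi x
    have h0 : (L i) 0 = -(L i).linear p := by
      have := hLval (L i) p
      rw [hi] at this; linarith
    rw [hLval (L i) (σ x), hLval (L i) x, h0, hσ]
    simp only [map_sub, map_smul, smul_eq_mul]
    ring
  have hNsymm : ∀ x ∈ ball p r, N (σ x) = N x := by
    intro x hx
    rw [hNball _ (hσball x hx), hNball _ hx]
    apply Finset.sum_congr rfl
    intro i _
    by_cases hi : L i p = 0
    · simp [hi, hLσ i hi x]
    · simp [hi]
  -- conclusion
  refine ⟨r, hr0, (toDual ℝ (EuclideanSpace ℝ (Fin d))).symm lA + (toDual ℝ (EuclideanSpace ℝ (Fin d))).symm lA, ?_⟩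
  intro q hq hdq hdσq
  have hσq : σ q ∈ ball p r := hσball q hq
  have hAdiffq : DifferentiableAt ℝ A q := (hAderiv q).differentiableAt
  have hAdiffσq : DifferentiableAt ℝ A (σ q) := (hAderiv (σ q)).differentiableAt
  have hNdq : DifferentiableAt ℝ N q := hdq.sub hAdiffq
  have hNdσq : DifferentiableAt ℝ N (σ q) := hdσq.sub hAdiffσq
  have hhAN : h = fun x => A x + N x := by
    funext x; rw [hN]; ring
  have hfq : fderiv ℝ h q = lA + fderiv ℝ N q := by
    have := (hAderiv q).add hNdq.hasFDerivAt
    rw [show A + N = h from hhAN.symm] at this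
    exact this.fderiv
  have hfσq : fderiv ℝ h (σ q) = lA + fderiv ℝ N (σ q) := by
    have := (hAderiv (σ q)).add hNdσq.hasFDerivAt
    rw [show A + N = h from hhAN.symm] at this
    exact this.fderiv
  -- fderiv of N is antisymmetric about p
  have hσderiv : HasFDerivAt σ (-(ContinuousLinearMap.id ℝ (EuclideanSpace ℝ (Fin d)))) q :=
    (hasFDerivAt_id q).const_sub ((2 : ℝ) • p)
  have hcomp : HasFDerivAt (N ∘ σ)
      ((fderiv ℝ N (σ q)).comp (-(ContinuousLinearMap.id ℝ (EuclideanSpace ℝ (Fin d))))) q :=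
    hNdσq.hasFDerivAt.comp q hσderiv
  have hev : N ∘ σ =ᶠ[nhds q] N :=
    Filter.eventuallyEq_of_mem (isOpen_ball.mem_nhds hq) fun x hx => hNsymm x hx
  have hNq : HasFDerivAt N ((fderiv ℝ N (σ q)).comp (-(ContinuousLinearMap.id ℝ (EuclideanSpace ℝ (Fin d))))) q :=
    hcomp.congr_of_eventuallyEq hev.symm
  have hcompneg : (fderiv ℝ N (σ q)).comp (-(ContinuousLinearMap.id ℝ (EuclideanSpace ℝ (Fin d))))
      = -(fderiv ℝ N (σ q)) := by
    ext v; simp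
  have hfNq : fderiv ℝ N q = -(fderiv ℝ N (σ q)) := by
    rw [hNq.fderiv, hcompneg]
  show gradient h q + gradient h (σ q) = _
  rw [gradient, gradient, hfq, hfσq, hfNq]
  simp only [map_add, map_neg]
  abel
end

section
/- Let h : ℝᵈ → ℝ, h(x) = ⟪e, x⟫ + Σᵢ₌₁ᵗ εᵢ·|⟪wᵢ, x⟫| with εᵢ ∈ {1,-1}, and suppose v₁, …, v_n ∈ ℝᵈ satisfy h(vᵢ) > 0 and h(−vᵢ) ≤ 0 for each i, while g₁, …, g_m ∈ ℝᵈ satisfy h(gⱼ) = 0 and h(−gⱼ) = 0 for each j. Then no nonzero nonnegative combination of the vᵢ can equal a linear combination of the gⱼ; i.e., if λᵢ ≥ 0, not all zero, and μⱼ ∈ ℝ satisfy Σᵢ λᵢ vᵢ = Σⱼ μⱼ gⱼ, we obtain a contradiction (such λ, μ do not exist). -/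
theorem stmt19 (d t : ℕ) (e : EuclideanSpace ℝ (Fin d))
    (w : Fin t → EuclideanSpace ℝ (Fin d)) (ε : Fin t → ℝ)
    (hε : ∀ i, ε i = 1 ∨ ε i = -1)
    (h : EuclideanSpace ℝ (Fin d) → ℝ)
    (hh : ∀ x, h x = (inner ℝ e x : ℝ) + ∑ i, ε i * |(inner ℝ (w i) x : ℝ)|)
    (n m : ℕ) (v : Fin n → EuclideanSpace ℝ (Fin d))
    (g : Fin m → EuclideanSpace ℝ (Fin d))
    (hv : ∀ i, 0 < h (v i) ∧ h (-(v i)) ≤ 0)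
    (hg : ∀ j, h (g j) = 0 ∧ h (-(g j)) = 0) :
    ¬ ∃ (lam : Fin n → ℝ) (mu : Fin m → ℝ),
      (∀ i, 0 ≤ lam i) ∧ (∃ i, lam i ≠ 0) ∧
      ∑ i, lam i • v i = ∑ j, mu j • g j := by
  rintro ⟨lam, mu, hlam, ⟨i0, hi0⟩, heq⟩
  have key : ∀ x, h x - h (-x) = 2 * (inner ℝ e x : ℝ) := by
    intro x
    rw [hh x, hh (-x)]
    have : ∀ i : Fin t, |(inner ℝ (w i) (-x) : ℝ)| = |(inner ℝ (w i) x : ℝ)| := by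
      intro i; rw [inner_neg_right, abs_neg]
    simp only [inner_neg_right, abs_neg]
    ring
  have hev : ∀ i, 0 < (inner ℝ e (v i) : ℝ) := by
    intro i
    have := key (v i)
    nlinarith [(hv i).1, (hv i).2]
  have heg : ∀ j, (inner ℝ e (g j) : ℝ) = 0 := by
    intro j
    have := key (g j)
    nlinarith [(hg j).1, (hg j).2]
  have h1 : (inner ℝ e (∑ i, lam i • v i) : ℝ) = ∑ i, lam i * (inner ℝ e (v i) : ℝ) := by
    rw [inner_sum]; simp [inner_smul_right]
  have h2 : (inner ℝ e (∑ j, mu j • g j) : ℝ) = 0 := by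
    rw [inner_sum]; simp [inner_smul_right, heg]
  have hpos : 0 < ∑ i, lam i * (inner ℝ e (v i) : ℝ) := by
    apply Finset.sum_pos' (fun i _ => mul_nonneg (hlam i) (hev i).le)
    exact ⟨i0, Finset.mem_univ i0,
      mul_pos (lt_of_le_of_ne (hlam i0) (Ne.symm hi0)) (hev i0)⟩
  rw [heq, h2] at h1
  linarith
end
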